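/- For every perfect matching M on a set P of n points in the plane in convex position (and in general position), there exists a sequence of at most n/2 − 1 flips transforming M into a plane perfect matching; that is, f(M) ≤ n/2 − 1. -/

import Mathlib

open EuclideanGeometry Real

noncomputable section

/-- Points of the Euclidean plane. -/
abbrev Pt : Type := EuclideanSpace ℝ (Fin 2)

/-- Two closed segments `ab` and `cd` on four distinct points *cross* if their open
segments have a common point. -/
def SegCross (a b c d : Pt) : Prop :=
  a ≠ b ∧ a ≠ c ∧ a ≠ d ∧ b ≠ c ∧ b ≠ d ∧ c ≠ d ∧
    (openSegment ℝ a b ∩ openSegment ℝ c d).Nonempty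

/-- `M` is a perfect matching on the point set `P`: a set of non-degenerate unordered
pairs (edges) of points of `P` such that every point of `P` lies in exactly one edge. -/
def IsPM (P : Finset Pt) (M : Set (Sym2 Pt)) : Prop :=
  (∀ e ∈ M, ¬ e.IsDiag) ∧
  (∀ e ∈ M, ∀ p ∈ e, p ∈ P) ∧
  (∀ p ∈ P, ∃! e, e ∈ M ∧ p ∈ e)

/-- Two unordered edges cross. -/
def EdgeCross (e f : Sym2 Pt) : Prop :=
  ∃ a b c d : Pt, e = s(a, b) ∧ f = s(c, d) ∧ SegCross a b c d

/-- A matching is plane if no two of its edges cross. -/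
def PlaneM (M : Set (Sym2 Pt)) : Prop :=
  ∀ e ∈ M, ∀ f ∈ M, ¬ EdgeCross e f

/-- `M'` is obtained from `M` by a single flip: two crossing edges `{a,b}`, `{c,d}`
are replaced by `{a,c}`, `{b,d}` or by `{a,d}`, `{b,c}`. -/
def Flip (M M' : Set (Sym2 Pt)) : Prop :=
  ∃ a b c d : Pt, s(a, b) ∈ M ∧ s(c, d) ∈ M ∧ SegCross a b c d ∧
    (M' = (M \ {s(a, b), s(c, d)}) ∪ {s(a, c), s(b, d)} ∨
     M' = (M \ {s(a, b), s(c, d)}) ∪ {s(a, d), s(b, c)})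

/-- `M` can be transformed into a plane matching by at most `k` flips. -/
def FlipsToPlane (M : Set (Sym2 Pt)) (k : ℕ) : Prop :=
  ∃ (j : ℕ) (g : ℕ → Set (Sym2 Pt)), j ≤ k ∧ g 0 = M ∧
    (∀ i < j, Flip (g i) (g (i + 1))) ∧ PlaneM (g j)

/-- No three distinct points of `P` are collinear. -/
def GenPos (P : Set Pt) : Prop :=
  ∀ p ∈ P, ∀ q ∈ P, ∀ r ∈ P, p ≠ q → p ≠ r → q ≠ r →
    ¬ Collinear ℝ ({p, q, r} : Set Pt)

/-- `P` is in convex position: no point lies in the convex hull of the others. -/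
def ConvexPos (P : Set Pt) : Prop :=
  ∀ p ∈ P, p ∉ convexHull ℝ (P \ {p})

namespace Stmt6

noncomputable def D (p q x : Pt) : ℝ :=
  (q 0 - p 0) * (x 1 - p 1) - (q 1 - p 1) * (x 0 - p 0)

lemma D_self_left (p q : Pt) : D p q p = 0 := by simp [D]

lemma D_self_right (p q : Pt) : D p q q = 0 := by simp [D]; ring

lemma D_diag (p x : Pt) : D p p x = 0 := by simp [D]

lemma D_swap23 (p q x : Pt) : D p q x = - D p x q := by simp [D]; ring

lemma D_swap12 (p q x : Pt) : D q p x = - D p q x := by simp [D]; ring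

lemma D_combo (p q u v : Pt) (t : ℝ) :
    D p q ((1-t) • u + t • v) = (1-t) * D p q u + t * D p q v := by
  simp [D, PiLp.add_apply, PiLp.smul_apply, smul_eq_mul]; ring

lemma pluecker (a b x y z : Pt) :
    D a x y * D a b z - D a x z * D a b y + D a y z * D a b x = 0 := by
  simp [D]; ring

lemma exists_s_of_D_eq_zero {p q x : Pt} (hpq : p ≠ q) (h : D p q x = 0) :
    ∃ s : ℝ, x = (1 - s) • p + s • q := by
  have hne : q 0 - p 0 ≠ 0 ∨ q 1 - p 1 ≠ 0 := by
    by_contra hc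
    push_neg at hc
    apply hpq
    ext i; fin_cases i <;> simp <;> linarith [hc.1, hc.2]
  unfold D at h
  rcases hne with h0 | h1
  · refine ⟨(x 0 - p 0)/(q 0 - p 0), ?_⟩
    ext i; fin_cases i <;> simp [PiLp.add_apply, PiLp.smul_apply, smul_eq_mul]
    · field_simp; ring
    · field_simp; nlinarith [h]
  · refine ⟨(x 1 - p 1)/(q 1 - p 1), ?_⟩
    ext i; fin_cases i <;> simp [PiLp.add_apply, PiLp.smul_apply, smul_eq_mul]
    · field_simp; nlinarith [h]
    · field_simp; ring

lemma collinear_of_D_eq_zero {p q x : Pt} (hpq : p ≠ q) (h : D p q x = 0) :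
    Collinear ℝ ({p, q, x} : Set Pt) := by
  obtain ⟨s, hs⟩ := exists_s_of_D_eq_zero hpq h
  rw [collinear_iff_of_mem (Set.mem_insert p _)]
  refine ⟨q - p, ?_⟩
  intro y hy
  rcases hy with rfl | rfl | rfl
  · exact ⟨0, by simp⟩
  · exact ⟨1, by simp⟩
  · exact ⟨s, by rw [hs, vadd_eq_add]; module⟩

lemma D_ne_zero {P : Set Pt} (hgp : GenPos P) {p q x : Pt}
    (hp : p ∈ P) (hq : q ∈ P) (hx : x ∈ P)
    (hpq : p ≠ q) (hpx : p ≠ x) (hqx : q ≠ x) : D p q x ≠ 0 := by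
  intro h
  exact hgp p hp q hq x hx hpq hpx hqx (collinear_of_D_eq_zero hpq h)

/-- membership in an open segment, parametrized. -/
lemma mem_openSegment_iff {u v z : Pt} :
    z ∈ openSegment ℝ u v ↔ ∃ t : ℝ, 0 < t ∧ t < 1 ∧ z = (1-t) • u + t • v := by
  rw [openSegment_eq_image]
  constructor
  · rintro ⟨t, ⟨h1, h2⟩, rfl⟩; exact ⟨t, h1, h2, rfl⟩
  · rintro ⟨t, h1, h2, rfl⟩; exact ⟨t, ⟨h1, h2⟩, rfl⟩

lemma D_pos_openSegment {p q u v z : Pt} (hz : z ∈ openSegment ℝ u v)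
    (hu : 0 < D p q u) (hv : 0 < D p q v) : 0 < D p q z := by
  obtain ⟨t, h0, h1, rfl⟩ := mem_openSegment_iff.mp hz
  rw [D_combo]; nlinarith

lemma D_neg_openSegment {p q u v z : Pt} (hz : z ∈ openSegment ℝ u v)
    (hu : D p q u < 0) (hv : D p q v < 0) : D p q z < 0 := by
  obtain ⟨t, h0, h1, rfl⟩ := mem_openSegment_iff.mp hz
  rw [D_combo]; nlinarith

lemma D_zero_openSegment {p q u v z : Pt} (hz : z ∈ openSegment ℝ u v)
    (hu : D p q u = 0) (hv : D p q v = 0) : D p q z = 0 := by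
  obtain ⟨t, h0, h1, rfl⟩ := mem_openSegment_iff.mp hz
  rw [D_combo, hu, hv]; ring


/-- The crossing lemma: two points on strictly opposite sides of the line `pq`
span a segment meeting the open segment `pq`, by convex position. -/
lemma cross {P : Finset Pt} (hcv : ConvexPos ↑P) {p q u v : Pt}
    (hp : p ∈ P) (hq : q ∈ P) (hu : u ∈ P) (hv : v ∈ P)
    (hu0 : 0 < D p q u) (hv0 : D p q v < 0) :
    ∃ z, z ∈ openSegment ℝ u v ∩ openSegment ℝ p q := by
  have hpq : p ≠ q := by
    rintro rfl; rw [D_diag] at hu0; exact lt_irrefl _ hu0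
  have hup : u ≠ p := fun h => by rw [h, D_self_left] at hu0; exact lt_irrefl _ hu0
  have huq : u ≠ q := fun h => by rw [h, D_self_right] at hu0; exact lt_irrefl _ hu0
  have hvp : v ≠ p := fun h => by rw [h, D_self_left] at hv0; exact lt_irrefl _ hv0
  have hvq : v ≠ q := fun h => by rw [h, D_self_right] at hv0; exact lt_irrefl _ hv0
  set α := D p q u with hα
  set β := D p q v with hβ
  have hden : 0 < α - β := by linarith
  set t : ℝ := α / (α - β) with ht
  have ht0 : 0 < t := div_pos hu0 hden
  have ht1 : t < 1 := by
    rw [div_lt_one hden]; linarith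
  set z : Pt := (1 - t) • u + t • v with hzdef
  have hzuv : z ∈ openSegment ℝ u v := mem_openSegment_iff.mpr ⟨t, ht0, ht1, rfl⟩
  have hz0 : D p q z = 0 := by
    rw [hzdef, D_combo, ← hα, ← hβ, ht]
    field_simp
    ring
  obtain ⟨s, hs⟩ := exists_s_of_D_eq_zero hpq hz0
  -- z is in the hull of P minus any point other than u, v
  have hzhull : ∀ w : Pt, w ≠ u → w ≠ v → z ∈ convexHull ℝ ((↑P : Set Pt) \ {w}) := by
    intro w hwu hwv
    have : openSegment ℝ u v ⊆ convexHull ℝ ((↑P : Set Pt) \ {w}) := by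
      refine (openSegment_subset_segment ℝ u v).trans (segment_subset_convexHull ?_ ?_)
      · exact ⟨hu, fun h => hwu (by rwa [Set.mem_singleton_iff, eq_comm] at h)⟩
      · exact ⟨hv, fun h => hwv (by rwa [Set.mem_singleton_iff, eq_comm] at h)⟩
    exact this hzuv
  have hcvx : ∀ w : Pt, Convex ℝ (convexHull ℝ ((↑P : Set Pt) \ {w})) :=
    fun w => convex_convexHull ℝ _
  have hs0 : 0 < s := by
    rcases lt_trichotomy s 0 with hlt | heq | hgt
    · exfalso
      -- p ∈ openSegment z q
      have hmem : p ∈ openSegment ℝ z q := by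
        rw [mem_openSegment_iff]
        refine ⟨-s/(1-s), div_pos (by linarith) (by linarith), ?_, ?_⟩
        · rw [div_lt_one (by linarith)]; linarith
        · rw [hs]
          have h1s : (1:ℝ) - s ≠ 0 := by linarith
          match_scalars <;> field_simp <;> ring
      have hzin : z ∈ convexHull ℝ ((↑P : Set Pt) \ {p}) := hzhull p (Ne.symm hup) (Ne.symm hvp)
      have hqin : q ∈ convexHull ℝ ((↑P : Set Pt) \ {p}) :=
        subset_convexHull ℝ _ ⟨hq, fun h => hpq (by rwa [Set.mem_singleton_iff, eq_comm] at h)⟩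
      have : p ∈ convexHull ℝ ((↑P : Set Pt) \ {p}) :=
        (hcvx p).openSegment_subset hzin hqin hmem
      exact hcv p hp this
    · exfalso
      have hzp : z = p := by rw [hs, heq]; simp
      exact hcv p hp (hzp ▸ hzhull p (Ne.symm hup) (Ne.symm hvp))
    · exact hgt
  have hs1 : s < 1 := by
    rcases lt_trichotomy s 1 with hlt | heq | hgt
    · exact hlt
    · exfalso
      have hzq : z = q := by rw [hs, heq]; simp
      exact hcv q hq (hzq ▸ hzhull q (Ne.symm huq) (Ne.symm hvq))
    · exfalso
      have hmem : q ∈ openSegment ℝ p z := by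
        rw [mem_openSegment_iff]
        refine ⟨1/s, by positivity, ?_, ?_⟩
        · rw [div_lt_one (by linarith)]; linarith
        · rw [hs]
          have hsne : s ≠ 0 := by linarith
          match_scalars <;> field_simp <;> ring
      have hzin : z ∈ convexHull ℝ ((↑P : Set Pt) \ {q}) := hzhull q (Ne.symm huq) (Ne.symm hvq)
      have hpin : p ∈ convexHull ℝ ((↑P : Set Pt) \ {q}) :=
        subset_convexHull ℝ _ ⟨hp, fun h => hpq (by rwa [Set.mem_singleton_iff] at h)⟩
      have : q ∈ convexHull ℝ ((↑P : Set Pt) \ {q}) :=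
        (hcvx q).openSegment_subset hpin hzin hmem
      exact hcv q hq this
  exact ⟨z, hzuv, mem_openSegment_iff.mpr ⟨s, hs0, hs1, hs⟩⟩



local instance : DecidableEq Pt := Classical.decEq _

/-- finite set with a total transitive relation has a maximal element. -/
lemma exists_best {α : Type*} (R : α → α → Prop) :
    ∀ s : Finset α,
      (∀ x ∈ s, ∀ y ∈ s, x ≠ y → R x y ∨ R y x) →
      (∀ x ∈ s, ∀ y ∈ s, ∀ z ∈ s, R x y → R y z → R x z) →
      s.Nonempty → ∃ c ∈ s, ∀ y ∈ s, y ≠ c → R c y := by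
  classical
  intro s
  induction s using Finset.cons_induction with
  | empty => intro _ _ h; simp at h
  | cons a t ha ih =>
    intro htot htrans _
    rcases t.eq_empty_or_nonempty with rfl | hne
    · exact ⟨a, by simp, by simp⟩
    · obtain ⟨c, hc, hcbest⟩ := ih
        (fun x hx y hy => htot x (Finset.mem_cons_of_mem hx) y (Finset.mem_cons_of_mem hy))
        (fun x hx y hy z hz => htrans x (Finset.mem_cons_of_mem hx) y (Finset.mem_cons_of_mem hy)
          z (Finset.mem_cons_of_mem hz))
        hne
      have hac : a ≠ c := by rintro rfl; exact ha hc
      rcases htot a (Finset.mem_cons_self a t) c (Finset.mem_cons_of_mem hc) hac with h1 | h1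
      · -- a beats c: a is best
        refine ⟨a, Finset.mem_cons_self a t, ?_⟩
        intro y hy hya
        rcases Finset.mem_cons.mp hy with rfl | hyt
        · exact absurd rfl hya
        · rcases eq_or_ne y c with rfl | hyc
          · exact h1
          · exact htrans a (Finset.mem_cons_self a t) c (Finset.mem_cons_of_mem hc) y
              (Finset.mem_cons_of_mem hyt) h1 (hcbest y hyt hyc)
      · refine ⟨c, Finset.mem_cons_of_mem hc, ?_⟩
        intro y hy hyc
        rcases Finset.mem_cons.mp hy with rfl | hyt
        · exact h1
        · exact hcbest y hyt hyc

lemma edge_unique {P : Finset Pt} {M : Set (Sym2 Pt)} (hM : IsPM P M)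
    {e e' : Sym2 Pt} {p : Pt} (he : e ∈ M) (he' : e' ∈ M) (hpe : p ∈ e) (hpe' : p ∈ e') :
    e = e' := by
  have hp : p ∈ P := hM.2.1 e he p hpe
  obtain ⟨f, -, hfu⟩ := hM.2.2 p hp
  rw [hfu e ⟨he, hpe⟩, hfu e' ⟨he', hpe'⟩]

lemma partner {P : Finset Pt} {M : Set (Sym2 Pt)} (hM : IsPM P M)
    {p : Pt} (hp : p ∈ P) :
    ∃ q, q ∈ P ∧ q ≠ p ∧ s(p,q) ∈ M ∧ ∀ e ∈ M, p ∈ e → e = s(p,q) := by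
  obtain ⟨e, ⟨heM, hpe⟩, hu⟩ := hM.2.2 p hp
  induction e using Sym2.ind with
  | _ x y =>
    rcases Sym2.mem_iff.mp hpe with rfl | rfl
    · refine ⟨y, hM.2.1 _ heM y (Sym2.mem_mk_right p y), ?_, heM, ?_⟩
      · intro h; exact hM.1 _ heM (by rw [h]; exact Sym2.mk_isDiag_iff.mpr rfl)
      · intro f hf hpf; exact edge_unique hM hf heM hpf (Sym2.mem_mk_left p y)
    · refine ⟨x, hM.2.1 _ heM x (Sym2.mem_mk_left x p), ?_, by rwa [Sym2.eq_swap], ?_⟩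
      · intro h; exact hM.1 _ heM (by rw [← h]; exact Sym2.mk_isDiag_iff.mpr rfl)
      · intro f hf hpf
        rw [edge_unique hM hf heM hpf (Sym2.mem_mk_right x p), Sym2.eq_swap]

lemma flipsToPlane_mono {M : Set (Sym2 Pt)} {k k' : ℕ} (h : k ≤ k')
    (hf : FlipsToPlane M k) : FlipsToPlane M k' := by
  obtain ⟨j, g, hj, h0, hf, hp⟩ := hf
  exact ⟨j, g, hj.trans h, h0, hf, hp⟩

lemma prepend {M M₁ : Set (Sym2 Pt)} (hf : Flip M M₁) {k : ℕ}
    (h : FlipsToPlane M₁ k) : FlipsToPlane M (k+1) := by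
  obtain ⟨j, g, hj, h0, hfl, hp⟩ := h
  refine ⟨j+1, fun i => match i with | 0 => M | (i+1) => g i, by omega, rfl, ?_, hp⟩
  intro i hi
  match i with
  | 0 => simpa [h0] using hf
  | (i+1) => exact hfl i (by omega)


lemma pm_flip {P : Finset Pt} {M : Set (Sym2 Pt)} (hM : IsPM P M)
    {a b c d : Pt} (hab : s(a,b) ∈ M) (hcd : s(c,d) ∈ M)
    (hac : a ≠ c) (had : a ≠ d) (hbc : b ≠ c) (hbd : b ≠ d) :
    IsPM P ((M \ {s(a,b), s(c,d)}) ∪ {s(a,c), s(b,d)}) := by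
  have hA : ∀ e, e ∈ M → a ∈ e → e = s(a,b) :=
    fun e he hae => edge_unique hM he hab hae (Sym2.mem_mk_left a b)
  have hB : ∀ e, e ∈ M → b ∈ e → e = s(a,b) :=
    fun e he hbe => edge_unique hM he hab hbe (Sym2.mem_mk_right a b)
  have hC : ∀ e, e ∈ M → c ∈ e → e = s(c,d) :=
    fun e he hce => edge_unique hM he hcd hce (Sym2.mem_mk_left c d)
  have hD : ∀ e, e ∈ M → d ∈ e → e = s(c,d) :=
    fun e he hde => edge_unique hM he hcd hde (Sym2.mem_mk_right c d)
  have hab' : a ≠ b := fun h => hM.1 _ hab (by rw [h]; exact Sym2.mk_isDiag_iff.mpr rfl)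
  have hcd' : c ≠ d := fun h => hM.1 _ hcd (by rw [h]; exact Sym2.mk_isDiag_iff.mpr rfl)
  have haP : a ∈ P := hM.2.1 _ hab a (Sym2.mem_mk_left a b)
  have hbP : b ∈ P := hM.2.1 _ hab b (Sym2.mem_mk_right a b)
  have hcP : c ∈ P := hM.2.1 _ hcd c (Sym2.mem_mk_left c d)
  have hdP : d ∈ P := hM.2.1 _ hcd d (Sym2.mem_mk_right c d)
  refine ⟨?_, ?_, ?_⟩
  · rintro e (⟨he, -⟩ | he)
    · exact hM.1 e he
    · rcases he with rfl | rfl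
      · exact fun h => hac (Sym2.mk_isDiag_iff.mp h)
      · exact fun h => hbd (Sym2.mk_isDiag_iff.mp h)
  · rintro e (⟨he, -⟩ | he) p hpe
    · exact hM.2.1 e he p hpe
    · rcases he with rfl | rfl
      · rcases Sym2.mem_iff.mp hpe with rfl | rfl
        exacts [haP, hcP]
      · rcases Sym2.mem_iff.mp hpe with rfl | rfl
        exacts [hbP, hdP]
  · intro p hpP
    rcases eq_or_ne p a with rfl | hpa
    · refine ⟨s(p,c), ⟨Or.inr (Or.inl rfl), Sym2.mem_mk_left p c⟩, ?_⟩
      rintro e ⟨(⟨he, hne⟩ | he), hpe⟩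
      · exact absurd (hA e he hpe) (fun h => hne (by rw [h]; simp))
      · rcases he with rfl | rfl
        · rfl
        · rcases Sym2.mem_iff.mp hpe with rfl | rfl
          · exact absurd rfl hab'
          · exact absurd rfl had
    · rcases eq_or_ne p b with rfl | hpb
      · refine ⟨s(p,d), ⟨Or.inr (Or.inr rfl), Sym2.mem_mk_left p d⟩, ?_⟩
        rintro e ⟨(⟨he, hne⟩ | he), hpe⟩
        · exact absurd (hB e he hpe) (fun h => hne (by rw [h]; simp))
        · rcases he with rfl | rfl
          · rcases Sym2.mem_iff.mp hpe with rfl | rfl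
            · exact absurd rfl hpa
            · exact absurd rfl hbc
          · rfl
      · rcases eq_or_ne p c with rfl | hpc
        · refine ⟨s(a,p), ⟨Or.inr (Or.inl rfl), Sym2.mem_mk_right a p⟩, ?_⟩
          rintro e ⟨(⟨he, hne⟩ | he), hpe⟩
          · exact absurd (hC e he hpe) (fun h => hne (by rw [h]; simp))
          · rcases he with rfl | rfl
            · rfl
            · rcases Sym2.mem_iff.mp hpe with rfl | rfl
              · exact absurd rfl hbc.symm
              · exact absurd rfl hcd'
        · rcases eq_or_ne p d with rfl | hpd
          · refine ⟨s(b,p), ⟨Or.inr (Or.inr rfl), Sym2.mem_mk_right b p⟩, ?_⟩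
            rintro e ⟨(⟨he, hne⟩ | he), hpe⟩
            · exact absurd (hD e he hpe) (fun h => hne (by rw [h]; simp))
            · rcases he with rfl | rfl
              · rcases Sym2.mem_iff.mp hpe with rfl | rfl
                · exact absurd rfl hpa
                · exact absurd rfl hpc
              · rfl
          · obtain ⟨e, ⟨heM, hpe⟩, -⟩ := hM.2.2 p hpP
            have he1 : e ≠ s(a,b) := by
              rintro rfl
              rcases Sym2.mem_iff.mp hpe with rfl | rfl
              exacts [hpa rfl, hpb rfl]
            have he2 : e ≠ s(c,d) := by
              rintro rfl
              rcases Sym2.mem_iff.mp hpe with rfl | rfl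
              exacts [hpc rfl, hpd rfl]
            refine ⟨e, ⟨Or.inl ⟨heM, by simp [he1, he2]⟩, hpe⟩, ?_⟩
            rintro f ⟨(⟨hf, -⟩ | hf), hpf⟩
            · exact edge_unique hM hf heM hpf hpe
            · rcases hf with rfl | rfl
              · rcases Sym2.mem_iff.mp hpf with rfl | rfl
                exacts [absurd rfl hpa, absurd rfl hpc]
              · rcases Sym2.mem_iff.mp hpf with rfl | rfl
                exacts [absurd rfl hpb, absurd rfl hpd]


lemma pm_erase {P : Finset Pt} {M : Set (Sym2 Pt)} (hM : IsPM P M)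
    {a c : Pt} (hmem : s(a,c) ∈ M) :
    IsPM ((P.erase a).erase c) (M \ {s(a,c)}) ∧
      (∀ e ∈ M \ ({s(a,c)} : Set (Sym2 Pt)), ∀ p ∈ e, p ∈ P ∧ p ≠ a ∧ p ≠ c) := by
  have key : ∀ e ∈ M \ ({s(a,c)} : Set (Sym2 Pt)), ∀ p ∈ e, p ∈ P ∧ p ≠ a ∧ p ≠ c := by
    rintro e ⟨heM, hne⟩ p hpe
    refine ⟨hM.2.1 e heM p hpe, ?_, ?_⟩
    · rintro rfl
      exact hne (edge_unique hM heM hmem hpe (Sym2.mem_mk_left p c))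
    · rintro rfl
      exact hne (edge_unique hM heM hmem hpe (Sym2.mem_mk_right a p))
  refine ⟨⟨fun e he => hM.1 e he.1, ?_, ?_⟩, key⟩
  · intro e he p hpe
    obtain ⟨h1, h2, h3⟩ := key e he p hpe
    exact Finset.mem_erase.mpr ⟨h3, Finset.mem_erase.mpr ⟨h2, h1⟩⟩
  · intro p hp
    rw [Finset.mem_erase, Finset.mem_erase] at hp
    obtain ⟨hpc, hpa, hpP⟩ := hp
    obtain ⟨e, ⟨heM, hpe⟩, -⟩ := hM.2.2 p hpP
    have hene : e ∉ ({s(a,c)} : Set (Sym2 Pt)) := by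
      intro h
      rw [Set.mem_singleton_iff] at h
      subst h
      rcases Sym2.mem_iff.mp hpe with rfl | rfl
      exacts [hpa rfl, hpc rfl]
    refine ⟨e, ⟨⟨heM, hene⟩, hpe⟩, ?_⟩
    rintro f ⟨⟨hfM, -⟩, hpf⟩
    exact edge_unique hM hfM heM hpf hpe

/-- support of a set of edges -/
def Supp (Q : Set Pt) (A : Set (Sym2 Pt)) : Prop := ∀ e ∈ A, ∀ p ∈ e, p ∈ Q

lemma flip_supp {Q : Set Pt} {A B : Set (Sym2 Pt)} (hA : Supp Q A) (hf : Flip A B) :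
    Supp Q B := by
  obtain ⟨x, y, z, w, hxy, hzw, -, hB | hB⟩ := hf <;> subst hB <;>
  · rintro e (⟨he, -⟩ | he) p hpe
    · exact hA e he p hpe
    · rcases he with rfl | rfl <;> rcases Sym2.mem_iff.mp hpe with rfl | rfl
      · exact hA _ hxy p (Sym2.mem_mk_left _ _)
      · exact hA _ hzw p (by simp)
      · exact hA _ hxy p (Sym2.mem_mk_right _ _)
      · exact hA _ hzw p (by simp)

lemma flip_lift {Q : Set Pt} {A B : Set (Sym2 Pt)} {h : Sym2 Pt}
    (hno : ∀ p ∈ h, p ∉ Q)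
    (hnd : ¬ h.IsDiag)
    (hA : Supp Q A) (hf : Flip A B) : Flip (A ∪ {h}) (B ∪ {h}) := by
  obtain ⟨x, y, z, w, hxy, hzw, hsc, hB | hB⟩ := hf <;>
  [refine ⟨x, y, z, w, Or.inl hxy, Or.inl hzw, hsc, Or.inl ?_⟩;
   refine ⟨x, y, z, w, Or.inl hxy, Or.inl hzw, hsc, Or.inr ?_⟩] <;>
  · subst hB
    have h1 : h ≠ s(x,y) := by
      rintro rfl
      exact hno x (Sym2.mem_mk_left x y) (hA _ hxy x (Sym2.mem_mk_left x y))
    have h2 : h ≠ s(z,w) := by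
      rintro rfl
      exact hno z (Sym2.mem_mk_left z w) (hA _ hzw z (Sym2.mem_mk_left z w))
    ext e
    by_cases he : e = h <;> simp [he, h1, h2] <;> tauto


lemma lift {Q : Set Pt} {a c : Pt} (hac : a ≠ c)
    (haQ : a ∉ Q) (hcQ : c ∉ Q)
    (hno : ∀ u v : Pt, u ∈ Q → v ∈ Q →
      ¬ (openSegment ℝ a c ∩ openSegment ℝ u v).Nonempty)
    {M₂ : Set (Sym2 Pt)} (hsupp : Supp Q M₂) {k : ℕ}
    (hF : FlipsToPlane M₂ k) : FlipsToPlane (M₂ ∪ {s(a,c)}) k := by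
  obtain ⟨j, g, hj, hg0, hflip, hplane⟩ := hF
  have hhno : ∀ p ∈ s(a,c), p ∉ Q := by
    intro p hp
    rcases Sym2.mem_iff.mp hp with rfl | rfl
    exacts [haQ, hcQ]
  have hnd : ¬ (s(a,c)).IsDiag := fun h => hac (Sym2.mk_isDiag_iff.mp h)
  have hsuppi : ∀ i, i ≤ j → Supp Q (g i) := by
    intro i
    induction i with
    | zero => intro _; rw [hg0]; exact hsupp
    | succ i ih =>
      intro hij
      exact flip_supp (ih (by omega)) (hflip i (by omega))
  refine ⟨j, fun i => g i ∪ {s(a,c)}, hj, by simp only [hg0], ?_, ?_⟩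
  · intro i hi
    exact flip_lift hhno hnd (hsuppi i (by omega)) (hflip i hi)
  · -- planarity
    have hQside : ∀ (x y u v : Pt), s(x,y) = s(a,c) → u ∈ Q → v ∈ Q →
        ¬ (openSegment ℝ x y ∩ openSegment ℝ u v).Nonempty := by
      intro x y u v hxy hu hv hne
      rcases Sym2.eq_iff.mp hxy with ⟨rfl, rfl⟩ | ⟨rfl, rfl⟩
      · exact hno u v hu hv hne
      · rw [openSegment_symm] at hne
        exact hno u v hu hv hne
    rintro e (he | he) f (hf | hf) ⟨x, y, u, v, hexy, hfuv, hsc⟩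
    · exact hplane e he f hf ⟨x, y, u, v, hexy, hfuv, hsc⟩
    · -- f = s(a,c)
      rw [Set.mem_singleton_iff] at hf
      subst hf
      obtain ⟨z, hz1, hz2⟩ := hsc.2.2.2.2.2.2
      have hx : x ∈ Q := hsuppi j le_rfl e he x (by rw [hexy]; exact Sym2.mem_mk_left x y)
      have hy : y ∈ Q := hsuppi j le_rfl e he y (by rw [hexy]; exact Sym2.mem_mk_right x y)
      exact hQside u v x y hfuv.symm hx hy ⟨z, hz2, hz1⟩
    · rw [Set.mem_singleton_iff] at he
      subst he
      obtain ⟨z, hz1, hz2⟩ := hsc.2.2.2.2.2.2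
      have hu : u ∈ Q := hsuppi j le_rfl f hf u (by rw [hfuv]; exact Sym2.mem_mk_left u v)
      have hv : v ∈ Q := hsuppi j le_rfl f hf v (by rw [hfuv]; exact Sym2.mem_mk_right u v)
      exact hQside x y u v hexy.symm hu hv ⟨z, hz1, hz2⟩
    · rw [Set.mem_singleton_iff] at he hf
      subst he; subst hf
      obtain ⟨hxy, hxu, hxv, hyu, hyv, huv, -⟩ := hsc
      rcases Sym2.eq_iff.mp hexy.symm with ⟨rfl, rfl⟩ | ⟨rfl, rfl⟩ <;>
        rcases Sym2.eq_iff.mp hfuv.symm with ⟨rfl, rfl⟩ | ⟨rfl, rfl⟩ <;> simp_all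


lemma D_neg_openSegment_left {p q u v z : Pt} (hz : z ∈ openSegment ℝ u v)
    (hu : D p q u = 0) (hv : D p q v < 0) : D p q z < 0 := by
  obtain ⟨t, h0, h1, rfl⟩ := mem_openSegment_iff.mp hz
  rw [D_combo, hu]; nlinarith

lemma D_pos_openSegment_left {p q u v z : Pt} (hz : z ∈ openSegment ℝ u v)
    (hu : D p q u = 0) (hv : 0 < D p q v) : 0 < D p q z := by
  obtain ⟨t, h0, h1, rfl⟩ := mem_openSegment_iff.mp hz
  rw [D_combo, hu]; nlinarith

lemma D_endpoint_pos {p q u v z : Pt} (hz : z ∈ openSegment ℝ u v)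
    (hu : D p q u = 0) (hzpos : 0 < D p q z) : 0 < D p q v := by
  obtain ⟨t, h0, h1, rfl⟩ := mem_openSegment_iff.mp hz
  rw [D_combo, hu] at hzpos; nlinarith

lemma D_endpoint_pos' {p q u v z : Pt} (hz : z ∈ openSegment ℝ u v)
    (hv : D p q v = 0) (hzpos : 0 < D p q z) : 0 < D p q u := by
  obtain ⟨t, h0, h1, rfl⟩ := mem_openSegment_iff.mp hz
  rw [D_combo, hv] at hzpos; nlinarith

lemma genpos_mono {S T : Set Pt} (h : S ⊆ T) (hT : GenPos T) : GenPos S :=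
  fun p hp q hq r hr h1 h2 h3 => hT p (h hp) q (h hq) r (h hr) h1 h2 h3

lemma convexpos_mono {S T : Set Pt} (h : S ⊆ T) (hT : ConvexPos T) : ConvexPos S :=
  fun p hp hmem => hT p (h hp)
    (convexHull_mono (Set.diff_subset_diff_left h) hmem)

noncomputable def posf (P : Finset Pt) (x y : Pt) : Finset Pt :=
  P.filter (fun t => 0 < D x y t)

noncomputable def negf (P : Finset Pt) (x y : Pt) : Finset Pt :=
  P.filter (fun t => D x y t < 0)

lemma posf_swap (P : Finset Pt) (x y : Pt) : posf P y x = negf P x y := by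
  unfold posf negf
  apply Finset.filter_congr
  intro t _
  rw [D_swap12]
  constructor <;> intro <;> [linarith; linarith]

lemma negf_swap (P : Finset Pt) (x y : Pt) : negf P y x = posf P x y := by
  unfold posf negf
  apply Finset.filter_congr
  intro t _
  rw [D_swap12]
  constructor <;> intro <;> [linarith; linarith]

/-- The main induction step, for an oriented minimal edge `(a, b)` whose positive
side is the smaller one. -/
lemma step (N : ℕ) (hev : Even N)
    (IH : ∀ m, m < N → Even m → ∀ P : Finset Pt, P.card = m → GenPos ↑P → ConvexPos ↑P →
      ∀ M, IsPM P M → FlipsToPlane M (m / 2 - 1))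
    (P : Finset Pt) (hPcard : P.card = N) (hgp : GenPos ↑P) (hcv : ConvexPos ↑P)
    (M : Set (Sym2 Pt)) (hM : IsPM P M)
    (a b : Pt) (haP : a ∈ P) (hbP : b ∈ P) (hab : a ≠ b) (habM : s(a,b) ∈ M)
    (hple : (posf P a b).card ≤ (negf P a b).card)
    (hmin : ∀ x y : Pt, x ∈ P → y ∈ P → x ≠ y → s(x,y) ∈ M →
      (posf P a b).card ≤ min (posf P x y).card (negf P x y).card) :
    FlipsToPlane M (N / 2 - 1) := by
  classical
  obtain ⟨m, hm⟩ := hev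
  have hsig : ∀ x ∈ P, x ≠ a → x ≠ b → 0 < D a b x ∨ D a b x < 0 := by
    intro x hxP hxa hxb
    rcases lt_trichotomy (D a b x) 0 with h | h | h
    · exact Or.inr h
    · exact absurd h (D_ne_zero hgp haP hbP hxP hab hxa.symm hxb.symm)
    · exact Or.inl h
  have hN2 : 2 ≤ N := by
    rw [← hPcard]
    exact Finset.one_lt_card.mpr ⟨a, haP, b, hbP, hab⟩
  rcases (posf P a b).eq_empty_or_nonempty with hpos0 | ⟨c0, hc0mem⟩
  · -- {a, b} is already a hull edge of M : peel it off
    have Hside : ∀ x ∈ P, x ≠ a → x ≠ b → D a b x < 0 := by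
      intro x hxP hxa hxb
      rcases hsig x hxP hxa hxb with h | h
      · exact absurd (by exact Finset.mem_filter.mpr ⟨hxP, h⟩ :
          x ∈ posf P a b) (by rw [hpos0]; simp)
      · exact h
    have hbP' : b ∈ P.erase a := Finset.mem_erase.mpr ⟨hab.symm, hbP⟩
    set P' : Finset Pt := (P.erase a).erase b with hP'
    have hPc' : P'.card = N - 2 := by
      rw [hP', Finset.card_erase_of_mem hbP', Finset.card_erase_of_mem haP, hPcard]
      omega
    have hsub : ↑P' ⊆ (↑P : Set Pt) := by
      intro x hx
      simp only [hP', Finset.coe_erase, Set.mem_diff] at hx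
      exact hx.1.1
    obtain ⟨hpm', hsupp'⟩ := pm_erase hM habM
    have hF2 : FlipsToPlane (M \ {s(a,b)}) ((N-2)/2 - 1) :=
      IH (N-2) (by omega) ⟨m-1, by omega⟩ P' hPc'
        (genpos_mono hsub hgp) (convexpos_mono hsub hcv) _ hpm'
    set Q : Set Pt := {x | x ∈ P ∧ x ≠ a ∧ x ≠ b} with hQ
    have hnoQ : ∀ u v : Pt, u ∈ Q → v ∈ Q →
        ¬ (openSegment ℝ a b ∩ openSegment ℝ u v).Nonempty := by
      rintro u v hu hv ⟨z, hz1, hz2⟩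
      have h1 : D a b z = 0 :=
        D_zero_openSegment hz1 (D_self_left a b) (D_self_right a b)
      have h2 : D a b z < 0 :=
        D_neg_openSegment hz2 (Hside u hu.1 hu.2.1 hu.2.2) (Hside v hv.1 hv.2.1 hv.2.2)
      linarith
    have hsuppQ : Supp Q (M \ {s(a,b)}) := by
      intro e he p hpe
      obtain ⟨h1, h2, h3⟩ := hsupp' e he p hpe
      exact ⟨h1, h2, h3⟩
    have hlift := lift hab (by simp [hQ]) (by simp [hQ]) hnoQ hsuppQ hF2
    have heq : (M \ {s(a,b)}) ∪ {s(a,b)} = M := by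
      rw [Set.diff_union_self]
      exact Set.union_eq_self_of_subset_right (by simp [habM])
    rw [heq] at hlift
    exact flipsToPlane_mono (by omega) hlift
  · -- there is a point on the positive side : find the extreme one and flip
    have hposP : ∀ x ∈ posf P a b, x ∈ P ∧ 0 < D a b x := by
      intro x hx
      exact Finset.mem_filter.mp hx
    have hposa : ∀ x ∈ posf P a b, x ≠ a := by
      intro x hx h
      have := (hposP x hx).2
      rw [h, D_self_left] at this
      exact lt_irrefl _ this
    have hposb : ∀ x ∈ posf P a b, x ≠ b := by
      intro x hx h
      have := (hposP x hx).2
      rw [h, D_self_right] at this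
      exact lt_irrefl _ this
    obtain ⟨c, hcmem, hcbest⟩ := exists_best (fun x y => D a x y < 0) (posf P a b)
      (by
        intro x hx y hy hxy
        have hx' := hposP x hx
        have hy' := hposP y hy
        rcases lt_trichotomy (D a x y) 0 with h | h | h
        · exact Or.inl h
        · exact absurd h (D_ne_zero hgp haP hx'.1 hy'.1 (hposa x hx).symm
            (hposa y hy).symm hxy)
        · refine Or.inr ?_
          rw [D_swap23] at h
          linarith)
      (by
        intro x hx y hy z hz hxy hyz
        have hx' := hposP x hx
        have hy' := hposP y hy
        have hz' := hposP z hz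
        have hid := pluecker a b x y z
        have h1 : D a x y * D a b z < 0 := mul_neg_of_neg_of_pos hxy hz'.2
        have h2 : D a y z * D a b x < 0 := mul_neg_of_neg_of_pos hyz hx'.2
        have h3 : D a x z * D a b y < 0 := by linarith
        by_contra hge
        push_neg at hge
        exact absurd h3 (not_lt.mpr (mul_nonneg hge hy'.2.le)))
      ⟨c0, hc0mem⟩
    have hcP : c ∈ P := (hposP c hcmem).1
    have hc0 : 0 < D a b c := (hposP c hcmem).2
    have hca : c ≠ a := hposa c hcmem
    have hcb : c ≠ b := hposb c hcmem
    have Hside : ∀ x ∈ P, x ≠ a → x ≠ c → D a c x < 0 := by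
      intro x hxP hxa hxc
      rcases eq_or_ne x b with rfl | hxb
      · rw [D_swap23]
        linarith
      rcases hsig x hxP hxa hxb with h | h
      · exact hcbest x (Finset.mem_filter.mpr ⟨hxP, h⟩) hxc
      · by_contra hge
        push_neg at hge
        have hne : D a c x ≠ 0 := D_ne_zero hgp haP hcP hxP hca.symm hxa.symm hxc.symm
        have hpos : 0 < D a c x := lt_of_le_of_ne hge (Ne.symm hne)
        obtain ⟨z, hz1, hz2⟩ := cross hcv haP hbP hcP hxP hc0 h
        have hzneg : D a c z < 0 :=
          D_neg_openSegment_left hz2 (D_self_left a c) (by rw [D_swap23]; linarith)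
        have hzpos : 0 < D a c z :=
          D_pos_openSegment_left hz1 (D_self_right a c) hpos
        linarith
    obtain ⟨d, hdP, hdc, hcdM, hcu⟩ := partner hM hcP
    have hcd : c ≠ d := hdc.symm
    have hda : d ≠ a := by
      rintro rfl
      have := edge_unique hM hcdM habM (Sym2.mem_mk_right c d) (Sym2.mem_mk_left d b)
      rcases Sym2.eq_iff.mp this with ⟨h1, -⟩ | ⟨h1, h2⟩
      · exact hca h1
      · exact hcb h1
    have hdb : d ≠ b := by
      rintro rfl
      have := edge_unique hM hcdM habM (Sym2.mem_mk_right c d) (Sym2.mem_mk_right a d)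
      rcases Sym2.eq_iff.mp this with ⟨h1, -⟩ | ⟨h1, h2⟩
      · exact hca h1
      · exact hcb h1
    have hdpos : d ∉ posf P a b := by
      intro hd
      have hd0 : 0 < D a b d := (hposP d hd).2
      have hmincd := hmin c d hcP hdP hcd hcdM
      have hσne : D c d a ≠ 0 :=
        D_ne_zero hgp hcP hdP haP hcd hca hda
      have hkey : ∀ (F : Finset Pt), F ⊆ (posf P a b).erase c →
          (posf P a b).card ≤ F.card → False := by
        intro F hsub hle
        have h1 : F.card ≤ ((posf P a b).erase c).card := Finset.card_le_card hsub
        have h2 : ((posf P a b).erase c).card = (posf P a b).card - 1 :=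
          Finset.card_erase_of_mem hcmem
        have h3 : 0 < (posf P a b).card := Finset.card_pos.mpr ⟨c, hcmem⟩
        omega
      rcases lt_trichotomy (D c d a) 0 with hσ | hσ | hσ
      · -- a on negative side of cd: positive side of cd is inside posf a b
        refine hkey (posf P c d) ?_ (hmincd.trans (min_le_left _ _))
        intro x hx
        obtain ⟨hxP, hx0⟩ := Finset.mem_filter.mp hx
        obtain ⟨z, hz1, hz2⟩ := cross hcv hcP hdP hxP haP hx0 hσ
        have hzpos : 0 < D a b z := D_pos_openSegment hz2 hc0 hd0
        have hxpos : 0 < D a b x := D_endpoint_pos' hz1 (D_self_left a b) hzpos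
        refine Finset.mem_erase.mpr ⟨?_, Finset.mem_filter.mpr ⟨hxP, hxpos⟩⟩
        rintro rfl
        rw [D_self_left] at hx0
        exact lt_irrefl _ hx0
      · exact hσne hσ
      · refine hkey (negf P c d) ?_ (hmincd.trans (min_le_right _ _))
        intro x hx
        obtain ⟨hxP, hx0⟩ := Finset.mem_filter.mp hx
        obtain ⟨z, hz1, hz2⟩ := cross hcv hcP hdP haP hxP hσ hx0
        have hzpos : 0 < D a b z := D_pos_openSegment hz2 hc0 hd0
        have hxpos : 0 < D a b x := D_endpoint_pos hz1 (D_self_left a b) hzpos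
        refine Finset.mem_erase.mpr ⟨?_, Finset.mem_filter.mpr ⟨hxP, hxpos⟩⟩
        rintro rfl
        rw [D_self_left] at hx0
        exact lt_irrefl _ hx0
    have hdneg : D a b d < 0 := by
      rcases hsig d hdP hda hdb with h | h
      · exact absurd (Finset.mem_filter.mpr ⟨hdP, h⟩) hdpos
      · exact h
    obtain ⟨z, hz1, hz2⟩ := cross hcv haP hbP hcP hdP hc0 hdneg
    have hseg : SegCross a b c d :=
      ⟨hab, hca.symm, hda.symm, hcb.symm, hdb.symm, hcd, ⟨z, hz2, hz1⟩⟩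
    set M₁ : Set (Sym2 Pt) := (M \ {s(a,b), s(c,d)}) ∪ {s(a,c), s(b,d)} with hM₁def
    have hflipM : Flip M M₁ := ⟨a, b, c, d, habM, hcdM, hseg, Or.inl rfl⟩
    have hM₁ : IsPM P M₁ := pm_flip hM habM hcdM hca.symm hda.symm hcb.symm hdb.symm
    have hacM₁ : s(a,c) ∈ M₁ := Or.inr (Or.inl rfl)
    have hcP' : c ∈ P.erase a := Finset.mem_erase.mpr ⟨hca, hcP⟩
    set P' : Finset Pt := (P.erase a).erase c with hP'
    have hPc' : P'.card = N - 2 := by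
      rw [hP', Finset.card_erase_of_mem hcP', Finset.card_erase_of_mem haP, hPcard]
      omega
    have hsub : ↑P' ⊆ (↑P : Set Pt) := by
      intro x hx
      simp only [hP', Finset.coe_erase, Set.mem_diff] at hx
      exact hx.1.1
    obtain ⟨hpm', hsupp'⟩ := pm_erase hM₁ hacM₁
    have hF2 : FlipsToPlane (M₁ \ {s(a,c)}) ((N-2)/2 - 1) :=
      IH (N-2) (by omega) ⟨m-1, by omega⟩ P' hPc'
        (genpos_mono hsub hgp) (convexpos_mono hsub hcv) _ hpm'
    set Q : Set Pt := {x | x ∈ P ∧ x ≠ a ∧ x ≠ c} with hQ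
    have hnoQ : ∀ u v : Pt, u ∈ Q → v ∈ Q →
        ¬ (openSegment ℝ a c ∩ openSegment ℝ u v).Nonempty := by
      rintro u v hu hv ⟨z', hz1', hz2'⟩
      have h1 : D a c z' = 0 :=
        D_zero_openSegment hz1' (D_self_left a c) (D_self_right a c)
      have h2 : D a c z' < 0 :=
        D_neg_openSegment hz2' (Hside u hu.1 hu.2.1 hu.2.2) (Hside v hv.1 hv.2.1 hv.2.2)
      linarith
    have hsuppQ : Supp Q (M₁ \ {s(a,c)}) := by
      intro e he p hpe
      obtain ⟨h1, h2, h3⟩ := hsupp' e he p hpe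
      exact ⟨h1, h2, h3⟩
    have hlift := lift hca.symm (by simp [hQ]) (by simp [hQ]) hnoQ hsuppQ hF2
    have heq : (M₁ \ {s(a,c)}) ∪ {s(a,c)} = M₁ := by
      rw [Set.diff_union_self]
      exact Set.union_eq_self_of_subset_right (by simp [hacM₁])
    rw [heq] at hlift
    have hfinal : FlipsToPlane M ((N-2)/2 - 1 + 1) := prepend hflipM hlift
    have hN4 : 4 ≤ N := by
      have hsubset : ({a, b, c, d} : Finset Pt) ⊆ P := by
        intro x hx
        simp only [Finset.mem_insert, Finset.mem_singleton] at hx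
        rcases hx with rfl | rfl | rfl | rfl
        exacts [haP, hbP, hcP, hdP]
      have hc4 : ({a, b, c, d} : Finset Pt).card = 4 := by
        rw [Finset.card_insert_of_notMem (by simp [hca.symm, hda.symm, hab]),
          Finset.card_insert_of_notMem (by simp [hcb.symm, hdb.symm]),
          Finset.card_insert_of_notMem (by simp [hcd]),
          Finset.card_singleton]
      calc 4 = ({a, b, c, d} : Finset Pt).card := hc4.symm
        _ ≤ P.card := Finset.card_le_card hsubset
        _ = N := hPcard
    exact flipsToPlane_mono (by omega) hfinal

/-- Main lemma: strong induction on the number of points. -/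
lemma main : ∀ N : ℕ, Even N → ∀ P : Finset Pt, P.card = N → GenPos ↑P → ConvexPos ↑P →
    ∀ M : Set (Sym2 Pt), IsPM P M → FlipsToPlane M (N / 2 - 1) := by
  intro N
  induction N using Nat.strong_induction_on with
  | _ N ih =>
  intro hev P hPcard hgp hcv M hM
  classical
  rcases P.eq_empty_or_nonempty with rfl | ⟨p₀, hp₀⟩
  · have hM0 : M = ∅ := by
      ext e
      simp only [Set.mem_empty_iff_false, iff_false]
      intro he
      induction e using Sym2.ind with
      | _ x y => exact absurd (hM.2.1 _ he x (Sym2.mem_mk_left x y)) (by simp)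
    refine ⟨0, fun _ => M, Nat.zero_le _, rfl, fun i hi => absurd hi (by omega), ?_⟩
    rw [hM0]
    intro e he
    simp at he
  · obtain ⟨q₀, hq₀P, hq₀ne, hq₀M, -⟩ := partner hM hp₀
    set Fs : Finset (Pt × Pt) :=
      (P ×ˢ P).filter (fun z => z.1 ≠ z.2 ∧ s(z.1, z.2) ∈ M) with hFs
    have hFsne : Fs.Nonempty := by
      refine ⟨(p₀, q₀), ?_⟩
      rw [hFs, Finset.mem_filter, Finset.mem_product]
      exact ⟨⟨hp₀, hq₀P⟩, hq₀ne.symm, hq₀M⟩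
    obtain ⟨z₀, hz₀mem, hz₀min⟩ := Finset.exists_min_image Fs
      (fun z => min (posf P z.1 z.2).card (negf P z.1 z.2).card) hFsne
    rw [hFs, Finset.mem_filter, Finset.mem_product] at hz₀mem
    obtain ⟨⟨ha₀P, hb₀P⟩, hab₀, hab₀M⟩ := hz₀mem
    have hz₀min' : ∀ x y : Pt, x ∈ P → y ∈ P → x ≠ y → s(x,y) ∈ M →
        min (posf P z₀.1 z₀.2).card (negf P z₀.1 z₀.2).card ≤
          min (posf P x y).card (negf P x y).card := by
      intro x y hx hy hxy hxyM
      exact hz₀min (x, y) (by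
        rw [hFs, Finset.mem_filter, Finset.mem_product]
        exact ⟨⟨hx, hy⟩, hxy, hxyM⟩)
    rcases le_total (posf P z₀.1 z₀.2).card (negf P z₀.1 z₀.2).card with hle | hle
    · refine step N hev ih P hPcard hgp hcv M hM z₀.1 z₀.2 ha₀P hb₀P hab₀ hab₀M hle ?_
      intro x y hx hy hxy hxyM
      have := hz₀min' x y hx hy hxy hxyM
      omega
    · refine step N hev ih P hPcard hgp hcv M hM z₀.2 z₀.1 hb₀P ha₀P hab₀.symm
        (by rwa [Sym2.eq_swap]) ?_ ?_
      · rw [posf_swap P z₀.1 z₀.2, negf_swap P z₀.1 z₀.2]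
        exact hle
      · intro x y hx hy hxy hxyM
        have := hz₀min' x y hx hy hxy hxyM
        rw [posf_swap P z₀.1 z₀.2]
        omega

end Stmt6


/-- Every perfect matching on `n` points in convex (and general)
position can be transformed into a plane perfect matching by at most `n/2 - 1` flips. -/
theorem stmt6 (n : ℕ) (hn : Even n) (P : Finset Pt) (hcard : P.card = n)
    (hgp : GenPos ↑P) (hcv : ConvexPos ↑P)
    (M : Set (Sym2 Pt)) (hM : IsPM P M) :
    FlipsToPlane M (n / 2 - 1) := by
  exact Stmt6.main n hn P hcard hgp hcv M hM
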